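/- Let q ∈ C¹([0,T]×ℝ) be nonnegative with q(t,·) compactly supported for every t, let γ : [0,∞) → [0,∞) be continuously differentiable, nonincreasing, integrable with lim_{z→∞} γ(z) = 0, let V₁, V₂ ∈ C¹(ℝ) satisfy either (V₁' ≤ 0 and V₂' ≥ 0) or (V₁' ≥ 0 and V₂' ≤ 0), and suppose q solves pointwise the equation ∂_t q(t,x) + ∂_x( V₁(W(t,x)) q(t,x) ) = 0, where W(t,x) := ∫_x^∞ γ(y−x) V₂(q(t,y)) dy. Then at every point (t, x̃) where q(t,·) attains its global maximum over ℝ, one has ∂_t q(t, x̃) ≤ 0. -/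

import Mathlib

open MeasureTheory Set Filter

/-- The nonlocal term `W(t,x) = ∫_x^∞ γ(y−x) V₂(q(t,y)) dy` for `q : ℝ × ℝ → ℝ`. -/
noncomputable def nonlocalW (γ V₂ : ℝ → ℝ) (q : ℝ × ℝ → ℝ) (t x : ℝ) : ℝ :=
  ∫ y in Set.Ioi x, γ (y - x) * V₂ (q (t, y))

lemma mul_nonneg_of_nonpos_nonpos' {a b : ℝ} (ha : a ≤ 0) (hb : b ≤ 0) : 0 ≤ a * b := by
  nlinarith

/-- One-sided derivative of an antitone function on `Ici 0` is nonpositive. -/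
lemma antitone_derivWithin_nonpos {γ : ℝ → ℝ} (hγ_smooth : ContDiffOn ℝ 1 γ (Set.Ici 0))
    (hγ_mono : AntitoneOn γ (Set.Ici 0)) {x : ℝ} (hx : 0 ≤ x) :
    derivWithin γ (Set.Ici 0) x ≤ 0 := by
  have hdiff : DifferentiableWithinAt ℝ γ (Set.Ici 0) x :=
    (hγ_smooth.differentiableOn one_ne_zero) x hx
  have hsub : Set.Ioi x ⊆ Set.Ici (0:ℝ) := fun y hy => le_of_lt (lt_of_le_of_lt hx hy)
  have hD : HasDerivWithinAt γ (derivWithin γ (Set.Ici 0) x) (Set.Ioi x) x :=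
    hdiff.hasDerivWithinAt.mono hsub
  rw [hasDerivWithinAt_iff_tendsto_slope] at hD
  have hset : Set.Ioi x \ {x} = Set.Ioi x := Set.diff_singleton_eq_self (by simp)
  rw [hset] at hD
  refine le_of_tendsto hD ?_
  filter_upwards [self_mem_nhdsWithin] with y hy
  have hxy : x < y := hy
  have hle : γ y ≤ γ x := hγ_mono hx (hsub hy) hxy.le
  rw [slope_def_field]
  exact div_nonpos_of_nonpos_of_nonneg (by linarith) (by linarith)

/-- Key sign lemma: `∫_0^∞ γ ψ' ≤ 0` for a nonnegative, nonincreasing, integrable kernel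
and a `C¹` function `ψ ≤ 0` on `[0,∞)` with `ψ 0 = 0` and compactly supported derivative. -/
lemma key_integral_nonpos {γ ψ : ℝ → ℝ}
    (hγ_smooth : ContDiffOn ℝ 1 γ (Set.Ici 0)) (hγ_nonneg : ∀ z ∈ Set.Ici (0 : ℝ), 0 ≤ γ z)
    (hγ_mono : AntitoneOn γ (Set.Ici 0)) (hγ_int : MeasureTheory.IntegrableOn γ (Set.Ici 0))
    (hψ : ContDiff ℝ 1 ψ) (hψ' : HasCompactSupport (deriv ψ))
    (hψ0 : ψ 0 = 0) (hψle : ∀ z, 0 ≤ z → ψ z ≤ 0) :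
    ∫ z in Set.Ioi (0:ℝ), γ z * deriv ψ z ≤ 0 := by
  obtain ⟨C, hC⟩ := hψ'.exists_bound_of_continuous (hψ.continuous_deriv le_rfl)
  have hγIoi : IntegrableOn γ (Set.Ioi 0) := hγ_int.mono_set Set.Ioi_subset_Ici_self
  have hγmeas : AEStronglyMeasurable γ (volume.restrict (Set.Ioi (0:ℝ))) :=
    (hγ_smooth.continuousOn.mono Set.Ioi_subset_Ici_self).aestronglyMeasurable
      measurableSet_Ioi
  have hint : IntegrableOn (fun z => γ z * deriv ψ z) (Set.Ioi 0) := by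
    refine Integrable.mono' (hγIoi.mul_const C)
      (hγmeas.mul ((hψ.continuous_deriv le_rfl).aestronglyMeasurable.restrict)) ?_
    filter_upwards [ae_restrict_mem measurableSet_Ioi] with z hz
    have hγz : 0 ≤ γ z := hγ_nonneg z (Set.mem_Ici.2 (le_of_lt hz))
    calc ‖γ z * deriv ψ z‖ = γ z * ‖deriv ψ z‖ := by
          rw [norm_mul, Real.norm_of_nonneg hγz]
      _ ≤ γ z * C := mul_le_mul_of_nonneg_left (hC z) hγz
  have hmono : Monotone (fun n : ℕ => Set.Ioc (0:ℝ) n) := fun a b hab =>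
    Set.Ioc_subset_Ioc_right (Nat.cast_le.2 hab)
  have hunion : ⋃ n : ℕ, Set.Ioc (0:ℝ) n = Set.Ioi 0 := by
    ext z
    simp only [Set.mem_iUnion, Set.mem_Ioc, Set.mem_Ioi]
    constructor
    · rintro ⟨n, h1, _⟩; exact h1
    · intro hz; obtain ⟨n, hn⟩ := exists_nat_gt z; exact ⟨n, hz, hn.le⟩
  have htend := tendsto_setIntegral_of_monotone (fun n : ℕ => measurableSet_Ioc) hmono
    (hunion ▸ hint)
  rw [hunion] at htend
  refine le_of_tendsto' htend ?_
  intro n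
  have hn0 : (0:ℝ) ≤ n := Nat.cast_nonneg n
  rw [← intervalIntegral.integral_of_le hn0]
  have huIcc : Set.uIcc (0:ℝ) (n:ℝ) = Set.Icc (0:ℝ) (n:ℝ) := Set.uIcc_of_le hn0
  have hIcc : Set.Icc (0:ℝ) (n:ℝ) ⊆ Set.Ici 0 := Set.Icc_subset_Ici_self
  have hγ'cont : ContinuousOn (derivWithin γ (Set.Ici 0)) (Set.Ici (0:ℝ)) :=
    hγ_smooth.continuousOn_derivWithin (uniqueDiffOn_Ici 0) le_rfl
  have ibp := intervalIntegral.integral_mul_deriv_eq_deriv_mul_of_hasDerivAt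
    (u := γ) (v := ψ) (u' := derivWithin γ (Set.Ici 0)) (v' := deriv ψ)
    (a := (0:ℝ)) (b := (n:ℝ))
    (by rw [huIcc]; exact hγ_smooth.continuousOn.mono hIcc)
    (hψ.continuous.continuousOn)
    (by
      intro x hx
      rw [min_eq_left hn0, max_eq_right hn0] at hx
      have hx0 : 0 < x := hx.1
      have hmem : Set.Ici (0:ℝ) ∈ nhds x := Ici_mem_nhds hx0
      have hd : DifferentiableAt ℝ γ x :=
        ((hγ_smooth.differentiableOn one_ne_zero) x hx0.le).differentiableAt hmem
      rw [derivWithin_of_mem_nhds hmem]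
      exact hd.hasDerivAt)
    (fun x _ => ((hψ.differentiable one_ne_zero) x).hasDerivAt)
    (by
      rw [← huIcc] at hIcc
      exact (hγ'cont.mono hIcc).intervalIntegrable)
    (((hψ.continuous_deriv le_rfl).continuousOn).intervalIntegrable)
  rw [ibp, hψ0, mul_zero, sub_zero]
  have h1 : γ n * ψ n ≤ 0 :=
    mul_nonpos_iff.2 (Or.inl ⟨hγ_nonneg _ hn0, hψle _ hn0⟩)
  have h2 : 0 ≤ ∫ x in (0:ℝ)..(n:ℝ), derivWithin γ (Set.Ici 0) x * ψ x := by
    refine intervalIntegral.integral_nonneg hn0 ?_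
    intro u hu
    have hu0 : 0 ≤ u := hu.1
    exact mul_nonneg_of_nonpos_nonpos'
      (antitone_derivWithin_nonpos hγ_smooth hγ_mono hu0) (hψle u hu0)
  linarith

theorem time_deriv_nonpos_at_max
    (T : ℝ) (hT : 0 < T) (q : ℝ × ℝ → ℝ) (γ V₁ V₂ : ℝ → ℝ)
    (hq_smooth : ContDiffOn ℝ 1 q (Set.Icc 0 T ×ˢ (Set.univ : Set ℝ)))
    (hq_nonneg : ∀ t x : ℝ, 0 ≤ q (t, x))
    (hq_supp : ∀ t : ℝ, HasCompactSupport fun x => q (t, x))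
    (hγ_smooth : ContDiffOn ℝ 1 γ (Set.Ici 0))
    (hγ_nonneg : ∀ z ∈ Set.Ici (0 : ℝ), 0 ≤ γ z)
    (hγ_mono : AntitoneOn γ (Set.Ici 0))
    (hγ_int : MeasureTheory.IntegrableOn γ (Set.Ici 0))
    (hγ_lim : Filter.Tendsto γ Filter.atTop (nhds 0))
    (hV₁ : ContDiff ℝ 1 V₁) (hV₂ : ContDiff ℝ 1 V₂)
    (hsign : ((∀ x, deriv V₁ x ≤ 0) ∧ (∀ x, 0 ≤ deriv V₂ x)) ∨
             ((∀ x, 0 ≤ deriv V₁ x) ∧ (∀ x, deriv V₂ x ≤ 0)))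
    (hPDE : ∀ t ∈ Set.Icc (0 : ℝ) T, ∀ x : ℝ,
      deriv (fun s => q (s, x)) t
        + deriv (fun y => V₁ (nonlocalW γ V₂ q t y) * q (t, y)) x = 0) :
    ∀ t ∈ Set.Icc (0 : ℝ) T, ∀ x₀ : ℝ,
      (∀ y : ℝ, q (t, y) ≤ q (t, x₀)) →
      deriv (fun s => q (s, x₀)) t ≤ 0 := by
  intro t ht x₀ hmax
  -- the spatial slice
  set g : ℝ → ℝ := fun y => q (t, y) with hg_def
  have hg : ContDiff ℝ 1 g := by
    rw [← contDiffOn_univ]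
    have hι : ContDiffOn ℝ 1 (fun y : ℝ => ((t, y) : ℝ × ℝ)) Set.univ :=
      (contDiff_const.prodMk contDiff_id).contDiffOn
    exact hq_smooth.comp hι (fun y _ => Set.mem_prod.2 ⟨ht, Set.mem_univ y⟩)
  have hg_supp : HasCompactSupport g := hq_supp t
  set h : ℝ → ℝ := fun y => V₂ (g y) with hh_def
  have hh : ContDiff ℝ 1 h := hV₂.comp hg
  -- the derivative of h has compact support
  have hh0 : HasCompactSupport (fun y => h y - V₂ 0) := by
    have : (fun y => h y - V₂ 0) = (fun u => V₂ u - V₂ 0) ∘ g := rfl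
    rw [this]
    exact hg_supp.comp_left (g := fun u => V₂ u - V₂ 0) (by simp)
  have hh'supp : HasCompactSupport (deriv h) := by
    have : deriv h = deriv (fun y => h y - V₂ 0) := by
      funext y; rw [deriv_sub_const]
    rw [this]
    exact hh0.deriv
  have hh'cont : Continuous (deriv h) := hh.continuous_deriv le_rfl
  obtain ⟨C, hC⟩ := hh'supp.exists_bound_of_continuous hh'cont
  obtain ⟨C₀, hC₀⟩ := hh0.exists_bound_of_continuous
    ((hh.continuous).sub continuous_const)
  have hhbd : ∀ y, ‖h y‖ ≤ C₀ + ‖V₂ 0‖ := by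
    intro y
    calc ‖h y‖ = ‖(h y - V₂ 0) + V₂ 0‖ := by ring_nf
      _ ≤ ‖h y - V₂ 0‖ + ‖V₂ 0‖ := norm_add_le _ _
      _ ≤ C₀ + ‖V₂ 0‖ := by have := hC₀ y; linarith
  -- translation identity for W
  have hshift : ∀ x : ℝ, nonlocalW γ V₂ q t x = ∫ z in Set.Ioi (0:ℝ), γ z * h (z + x) := by
    intro x
    have hmp : MeasurePreserving (fun z : ℝ => z + x) volume volume :=
      measurePreserving_add_right volume x
    have hemb : MeasurableEmbedding (fun z : ℝ => z + x) :=
      (Homeomorph.addRight x).measurableEmbedding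
    have key := hmp.setIntegral_preimage_emb hemb
      (fun y => γ (y - x) * V₂ (q (t, y))) (Set.Ioi x)
    have hpre : (fun z : ℝ => z + x) ⁻¹' (Set.Ioi x) = Set.Ioi 0 := by
      ext z; simp [Set.mem_Ioi]
    rw [hpre] at key
    calc nonlocalW γ V₂ q t x = ∫ y in Set.Ioi x, γ (y - x) * V₂ (q (t, y)) := rfl
      _ = ∫ z in Set.Ioi (0:ℝ), γ (z + x - x) * V₂ (q (t, z + x)) := key.symm
      _ = ∫ z in Set.Ioi (0:ℝ), γ z * h (z + x) := by
          congr 1; funext z; rw [add_sub_cancel_right]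
  -- measurability of γ on (0,∞)
  have hγmeas : AEStronglyMeasurable γ (volume.restrict (Set.Ioi (0:ℝ))) :=
    (hγ_smooth.continuousOn.mono Set.Ioi_subset_Ici_self).aestronglyMeasurable
      measurableSet_Ioi
  have hγIoi : IntegrableOn γ (Set.Ioi 0) := hγ_int.mono_set Set.Ioi_subset_Ici_self
  have hγnn : ∀ z ∈ Set.Ioi (0:ℝ), 0 ≤ γ z := fun z hz => hγ_nonneg z (Set.mem_Ici.2 (le_of_lt hz))
  -- differentiation under the integral sign
  set D : ℝ := ∫ z in Set.Ioi (0:ℝ), γ z * deriv h (z + x₀) with hD_def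
  have hW : HasDerivAt (fun x => nonlocalW γ V₂ q t x) D x₀ := by
    have main := hasDerivAt_integral_of_dominated_loc_of_deriv_le
      (F := fun x z => γ z * h (z + x)) (F' := fun x z => γ z * deriv h (z + x))
      (x₀ := x₀) (s := Metric.ball x₀ 1) (μ := volume.restrict (Set.Ioi (0:ℝ)))
      (bound := fun z => γ z * C) (Metric.ball_mem_nhds x₀ one_pos)
      (Filter.Eventually.of_forall fun x =>
        (hγmeas.mul ((hh.continuous.comp (continuous_id.add continuous_const)).aestronglyMeasurable.restrict)))
      (by
        refine Integrable.mono' (hγIoi.mul_const (C₀ + ‖V₂ 0‖))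
          (hγmeas.mul ((hh.continuous.comp (continuous_id.add continuous_const)).aestronglyMeasurable.restrict)) ?_
        filter_upwards [ae_restrict_mem measurableSet_Ioi] with z hz
        have hγz : 0 ≤ γ z := hγnn z hz
        calc ‖γ z * h (z + x₀)‖ = γ z * ‖h (z + x₀)‖ := by
              rw [norm_mul, Real.norm_of_nonneg hγz]
          _ ≤ γ z * (C₀ + ‖V₂ 0‖) := mul_le_mul_of_nonneg_left (hhbd _) hγz)
      (hγmeas.mul ((hh'cont.comp (continuous_id.add continuous_const)).aestronglyMeasurable.restrict))
      (by
        filter_upwards [ae_restrict_mem measurableSet_Ioi] with z hz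
        intro x _
        have hγz : 0 ≤ γ z := hγnn z hz
        calc ‖γ z * deriv h (z + x)‖ = γ z * ‖deriv h (z + x)‖ := by
              rw [norm_mul, Real.norm_of_nonneg hγz]
          _ ≤ γ z * C := mul_le_mul_of_nonneg_left (hC _) hγz)
      (hγIoi.mul_const C)
      (by
        refine Filter.Eventually.of_forall fun z => fun x _ => ?_
        have h1 : HasDerivAt (fun x : ℝ => z + x) 1 x := by
          simpa using (hasDerivAt_id x).const_add z
        have h2 : HasDerivAt (fun x => h (z + x)) (deriv h (z + x) * 1) x :=
          (((hh.differentiable one_ne_zero) (z + x)).hasDerivAt).comp (h₂ := h) (h := fun x : ℝ => z + x) x h1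
        simpa using h2.const_mul (γ z))
    have heq : (fun x => nonlocalW γ V₂ q t x) = fun x => ∫ z in Set.Ioi (0:ℝ), γ z * h (z + x) := by
      funext x; exact hshift x
    rw [heq]
    exact main.2
  -- spatial derivative of g vanishes at the max
  have hg'0 : deriv g x₀ = 0 := by
    have : IsLocalMax g x₀ := Filter.Eventually.of_forall fun y => hmax y
    exact this.deriv_eq_zero
  have hgd : HasDerivAt g 0 x₀ := by
    have := ((hg.differentiable one_ne_zero) x₀).hasDerivAt
    rwa [hg'0] at this
  -- derivative of the flux at x₀
  set W₀ : ℝ := nonlocalW γ V₂ q t x₀ with hW₀_def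
  have hA : HasDerivAt (fun x => V₁ (nonlocalW γ V₂ q t x)) (deriv V₁ W₀ * D) x₀ :=
    (((hV₁.differentiable one_ne_zero) W₀).hasDerivAt).comp x₀ hW
  have hflux : HasDerivAt (fun y => V₁ (nonlocalW γ V₂ q t y) * q (t, y))
      (deriv V₁ W₀ * D * g x₀) x₀ := by
    have := hA.mul hgd
    simpa [Pi.mul_def] using this
  -- the PDE at (t, x₀)
  have hP := hPDE t ht x₀
  rw [hflux.deriv] at hP
  -- sign analysis
  have hDsign : 0 ≤ deriv V₁ W₀ * D := by
    rcases hsign with ⟨hV₁', hV₂'⟩ | ⟨hV₁', hV₂'⟩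
    · -- V₁' ≤ 0, V₂ nondecreasing : D ≤ 0
      have hV₂mono : Monotone V₂ :=
        monotone_of_deriv_nonneg (hV₂.differentiable one_ne_zero) hV₂'
      set ψ : ℝ → ℝ := fun z => h (z + x₀) - h x₀ with hψ_def
      have hψc : ContDiff ℝ 1 ψ :=
        ((hh.comp ((contDiff_id.add contDiff_const))).sub contDiff_const)
      have hψd : ∀ z, HasDerivAt ψ (deriv h (z + x₀)) z := by
        intro z
        have h1 : HasDerivAt (fun z : ℝ => z + x₀) 1 z := by
          simpa using (hasDerivAt_id z).add_const x₀
        have h2 : HasDerivAt (fun z => h (z + x₀)) (deriv h (z + x₀) * 1) z :=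
          (((hh.differentiable one_ne_zero) (z + x₀)).hasDerivAt).comp (h₂ := h) (h := fun z : ℝ => z + x₀) z h1
        simpa [hψ_def] using h2.sub_const (h x₀)
      have hψ'eq : deriv ψ = fun z => deriv h (z + x₀) := by
        funext z; exact (hψd z).deriv
      have hψ'supp : HasCompactSupport (deriv ψ) := by
        rw [hψ'eq]
        exact hh'supp.comp_homeomorph (Homeomorph.addRight x₀)
      have hψ0 : ψ 0 = 0 := by simp [hψ_def]
      have hψle : ∀ z, 0 ≤ z → ψ z ≤ 0 := by
        intro z _
        have : h (z + x₀) ≤ h x₀ := hV₂mono (hmax (z + x₀))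
        simp [hψ_def]; linarith
      have hkey := key_integral_nonpos hγ_smooth hγ_nonneg hγ_mono hγ_int
        hψc hψ'supp hψ0 hψle
      have hDle : D ≤ 0 := by
        rw [hD_def]
        calc (∫ z in Set.Ioi (0:ℝ), γ z * deriv h (z + x₀))
            = ∫ z in Set.Ioi (0:ℝ), γ z * deriv ψ z := by rw [hψ'eq]
          _ ≤ 0 := hkey
      exact mul_nonneg_of_nonpos_nonpos' (hV₁' W₀) hDle
    · -- V₁' ≥ 0, V₂ nonincreasing : D ≥ 0
      have hV₂anti : Antitone V₂ :=
        antitone_of_deriv_nonpos (hV₂.differentiable one_ne_zero) hV₂'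
      set ψ : ℝ → ℝ := fun z => h x₀ - h (z + x₀) with hψ_def
      have hψc : ContDiff ℝ 1 ψ :=
        (contDiff_const.sub (hh.comp ((contDiff_id.add contDiff_const))))
      have hψd : ∀ z, HasDerivAt ψ (-deriv h (z + x₀)) z := by
        intro z
        have h1 : HasDerivAt (fun z : ℝ => z + x₀) 1 z := by
          simpa using (hasDerivAt_id z).add_const x₀
        have h2 : HasDerivAt (fun z => h (z + x₀)) (deriv h (z + x₀) * 1) z :=
          (((hh.differentiable one_ne_zero) (z + x₀)).hasDerivAt).comp (h₂ := h) (h := fun z : ℝ => z + x₀) z h1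
        simpa using h2.const_sub (h x₀)
      have hψ'eq : deriv ψ = fun z => -deriv h (z + x₀) := by
        funext z; exact (hψd z).deriv
      have hψ'supp : HasCompactSupport (deriv ψ) := by
        rw [hψ'eq]
        have hbase : HasCompactSupport (deriv h ∘ (fun z : ℝ => z + x₀)) :=
          hh'supp.comp_homeomorph (Homeomorph.addRight x₀)
        have : (fun z : ℝ => -deriv h (z + x₀))
            = (fun u : ℝ => -u) ∘ (deriv h ∘ (fun z : ℝ => z + x₀)) := rfl
        rw [this]
        exact hbase.comp_left (g := fun u : ℝ => -u) (by simp)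
      have hψ0 : ψ 0 = 0 := by simp [hψ_def]
      have hψle : ∀ z, 0 ≤ z → ψ z ≤ 0 := by
        intro z _
        have : h x₀ ≤ h (z + x₀) := hV₂anti (hmax (z + x₀))
        simp [hψ_def]; linarith
      have hkey := key_integral_nonpos hγ_smooth hγ_nonneg hγ_mono hγ_int
        hψc hψ'supp hψ0 hψle
      have hDge : 0 ≤ D := by
        have : (∫ z in Set.Ioi (0:ℝ), γ z * deriv ψ z) = -D := by
          rw [hD_def, ← integral_neg]
          congr 1; funext z
          rw [hψ'eq]; ring
        rw [this] at hkey
        linarith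
      exact mul_nonneg (hV₁' W₀) hDge
  have hq0 : 0 ≤ g x₀ := hq_nonneg t x₀
  have : 0 ≤ deriv V₁ W₀ * D * g x₀ := mul_nonneg hDsign hq0
  linarith
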